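/- Let f : I → ℝ⁺ be a continuous nonnegative operator convex function on an interval I ⊆ ℝ. Then for any bounded selfadjoint operators A and B on a complex Hilbert space H with spectra contained in I, any a, b ∈ (0,1) with a < b, and any x ∈ H with ‖x‖ = 1: |(1/2)∫₀ᵃ ⟨f((1−s)A + sB)x, x⟩ ds + (1/2)∫₀ᵇ ⟨f((1−s)A + sB)x, x⟩ ds − (1/(b−a))∫ₐᵇ (∫₀ᵗ ⟨f((1−s)A + sB)x, x⟩ ds) dt| ≤ ((b−a)/8)·[⟨f((1−a)A + aB)x, x⟩ + ⟨f((1−b)A + bB)x, x⟩]. -/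

import Mathlib

open scoped InnerProductSpace
open MeasureTheory

set_option synthInstance.maxHeartbeats 1000000
set_option maxHeartbeats 4000000

section DAOCHelpers
variable {H : Type*} [NormedAddCommGroup H] [InnerProductSpace ℂ H] [CompleteSpace H]

private lemma daoc_sa_smul (A : H →L[ℂ] H) (hA : IsSelfAdjoint A) (s : ℝ) :
    IsSelfAdjoint (s • A) := by
  rw [isSelfAdjoint_iff, star_smul, star_trivial, hA.star_eq]

private lemma daoc_sa_comb (A B : H →L[ℂ] H) (hA : IsSelfAdjoint A) (hB : IsSelfAdjoint B)
    (s : ℝ) : IsSelfAdjoint ((1 - s) • A + s • B) :=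
  (daoc_sa_smul A hA _).add (daoc_sa_smul B hB _)

private lemma daoc_re_smul (T : H →L[ℂ] H) (c : ℝ) (x : H) :
    RCLike.re ⟪(c • T) x, x⟫_ℂ = c * RCLike.re ⟪T x, x⟫_ℂ := by
  rw [ContinuousLinearMap.smul_apply, RCLike.real_smul_eq_coe_smul (K := ℂ), inner_smul_left,
    RCLike.conj_ofReal, RCLike.re_ofReal_mul]

private lemma daoc_smul_mono {T S : H →L[ℂ] H} (h : T ≤ S) {c : ℝ} (hc : 0 ≤ c) :
    c • T ≤ c • S := by
  rw [ContinuousLinearMap.le_def] at h ⊢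
  rw [← smul_sub]
  obtain ⟨hsa, hpos⟩ := h
  refine ⟨ContinuousLinearMap.isSelfAdjoint_iff_isSymmetric.mp
    (daoc_sa_smul _ (ContinuousLinearMap.isSelfAdjoint_iff_isSymmetric.mpr hsa) c), fun y => ?_⟩
  have h2 := hpos y
  rw [ContinuousLinearMap.reApplyInnerSelf] at h2 ⊢
  rw [daoc_re_smul]
  positivity

private lemma daoc_add_le_add {P Q R S : H →L[ℂ] H} (h1 : P ≤ Q) (h2 : R ≤ S) :
    P + R ≤ Q + S := by
  rw [ContinuousLinearMap.le_def] at h1 h2 ⊢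
  have := h1.add h2
  convert this using 1
  abel

private lemma daoc_inner_mono {T S : H →L[ℂ] H} (h : T ≤ S) (x : H) :
    RCLike.re ⟪T x, x⟫_ℂ ≤ RCLike.re ⟪S x, x⟫_ℂ := by
  have h2 := (ContinuousLinearMap.le_def T S |>.mp h).2 x
  rw [ContinuousLinearMap.reApplyInnerSelf, ContinuousLinearMap.sub_apply, inner_sub_left,
    map_sub] at h2
  linarith

private lemma daoc_inner_comb (P Q : H →L[ℂ] H) (c d : ℝ) (x : H) :
    RCLike.re ⟪(c • P + d • Q) x, x⟫_ℂ
      = c * RCLike.re ⟪P x, x⟫_ℂ + d * RCLike.re ⟪Q x, x⟫_ℂ := by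
  rw [ContinuousLinearMap.add_apply, inner_add_left, map_add, daoc_re_smul, daoc_re_smul]

private lemma daoc_inner_nonneg {T : H →L[ℂ] H} (h : 0 ≤ T) (x : H) :
    0 ≤ RCLike.re ⟪T x, x⟫_ℂ := by
  have := daoc_inner_mono h x
  simpa using this

end DAOCHelpers

private lemma daoc_integral_quadratic (c2 c1 c0 a b : ℝ) :
    (∫ s in a..b, (c2 * s ^ 2 + c1 * s + c0)) =
      (c2 * b ^ 3 / 3 + c1 * b ^ 2 / 2 + c0 * b)
        - (c2 * a ^ 3 / 3 + c1 * a ^ 2 / 2 + c0 * a) := by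
  have hd : ∀ u ∈ Set.uIcc a b,
      HasDerivAt (fun s => c2 * s ^ 3 / 3 + c1 * s ^ 2 / 2 + c0 * s)
        (c2 * u ^ 2 + c1 * u + c0) u := by
    intro u _
    have h1 := (((hasDerivAt_pow 3 u).const_mul c2).div_const 3).add
        ((((hasDerivAt_pow 2 u).const_mul c1).div_const 2).add ((hasDerivAt_id u).const_mul c0))
    convert h1 using 1
    · rfl
    · rfl
    · funext s; simp [id]; ring
    · simp; ring
  exact intervalIntegral.integral_eq_sub_of_hasDerivAt hd
    (by apply Continuous.intervalIntegrable; continuity)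

theorem dragomir_agarwal_operator_convex_inner
    {H : Type*} [NormedAddCommGroup H] [InnerProductSpace ℂ H] [CompleteSpace H]
    (I : Set ℝ) (hI : I.OrdConnected)
    (f : ℝ → ℝ) (hf : ContinuousOn f I) (hfnonneg : ∀ t ∈ I, 0 ≤ f t)
    (hconvex : ∀ A B : H →L[ℂ] H, IsSelfAdjoint A → IsSelfAdjoint B →
      spectrum ℝ A ⊆ I → spectrum ℝ B ⊆ I → ∀ lam ∈ Set.Icc (0:ℝ) 1,
        cfc f ((1 - lam) • A + lam • B) ≤ (1 - lam) • cfc f A + lam • cfc f B) :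
    ∀ A B : H →L[ℂ] H, IsSelfAdjoint A → IsSelfAdjoint B →
      spectrum ℝ A ⊆ I → spectrum ℝ B ⊆ I →
      ∀ a ∈ Set.Ioo (0:ℝ) 1, ∀ b ∈ Set.Ioo (0:ℝ) 1, a < b →
      ∀ x : H, ‖x‖ = 1 →
      |(2:ℝ)⁻¹ * (∫ s in (0:ℝ)..a, RCLike.re ⟪(cfc f ((1 - s) • A + s • B)) x, x⟫_ℂ) +
        (2:ℝ)⁻¹ * (∫ s in (0:ℝ)..b, RCLike.re ⟪(cfc f ((1 - s) • A + s • B)) x, x⟫_ℂ) -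
        (b - a)⁻¹ * ∫ t in a..b,
          (∫ s in (0:ℝ)..t, RCLike.re ⟪(cfc f ((1 - s) • A + s • B)) x, x⟫_ℂ)| ≤
      (b - a) / 8 *
        (RCLike.re ⟪(cfc f ((1 - a) • A + a • B)) x, x⟫_ℂ +
          RCLike.re ⟪(cfc f ((1 - b) • A + b • B)) x, x⟫_ℂ) := by
  intro A B hA hB hsA hsB a ha b hb hab x hx
  have hnt : Nontrivial H := ⟨x, 0, fun hh => by simp [hh] at hx⟩
  have hntL : Nontrivial (H →L[ℂ] H) := ⟨1, 0, one_ne_zero⟩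
  set φ : ℝ → ℝ := fun s => RCLike.re ⟪(cfc f ((1 - s) • A + s • B)) x, x⟫_ℂ with hφdef
  show |(2:ℝ)⁻¹ * (∫ s in (0:ℝ)..a, φ s) + (2:ℝ)⁻¹ * (∫ s in (0:ℝ)..b, φ s) -
      (b - a)⁻¹ * ∫ t in a..b, (∫ s in (0:ℝ)..t, φ s)| ≤ (b - a) / 8 * (φ a + φ b)
  have hab' : a ≤ b := hab.le
  have hba : (0:ℝ) < b - a := by linarith
  have habI : Set.uIcc a b = Set.Icc a b := Set.uIcc_of_le hab'
  have hsub : Set.Icc a b ⊆ Set.Ioo (0:ℝ) 1 :=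
    fun s hs => ⟨lt_of_lt_of_le ha.1 hs.1, lt_of_le_of_lt hs.2 hb.2⟩
  have hCsa : ∀ s : ℝ, IsSelfAdjoint ((1 - s) • A + s • B) := fun s => daoc_sa_comb A B hA hB s
  -- spectra of the convex combinations stay in I
  have hScpt : IsCompact (spectrum ℝ A ∪ spectrum ℝ B) :=
    (spectrum.isCompact A).union (spectrum.isCompact B)
  have hSne : (spectrum ℝ A ∪ spectrum ℝ B).Nonempty := by
    obtain ⟨z, hz⟩ := CFC.spectrum_nonempty (R := ℝ) A hA
    exact ⟨z, Or.inl hz⟩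
  set α := sInf (spectrum ℝ A ∪ spectrum ℝ B) with hαdef
  set β := sSup (spectrum ℝ A ∪ spectrum ℝ B) with hβdef
  have hαmem := hScpt.sInf_mem hSne
  have hβmem := hScpt.sSup_mem hSne
  have hαI : α ∈ I := hαmem.elim (fun h => hsA h) (fun h => hsB h)
  have hβI : β ∈ I := hβmem.elim (fun h => hsA h) (fun h => hsB h)
  have hIccI : Set.Icc α β ⊆ I := hI.out hαI hβI
  have hαA : algebraMap ℝ (H →L[ℂ] H) α ≤ A :=
    (algebraMap_le_iff_le_spectrum hA).mpr fun z hz => csInf_le hScpt.bddBelow (Or.inl hz)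
  have hαB : algebraMap ℝ (H →L[ℂ] H) α ≤ B :=
    (algebraMap_le_iff_le_spectrum hB).mpr fun z hz => csInf_le hScpt.bddBelow (Or.inr hz)
  have hAβ : A ≤ algebraMap ℝ (H →L[ℂ] H) β :=
    (le_algebraMap_iff_spectrum_le hA).mpr fun z hz => le_csSup hScpt.bddAbove (Or.inl hz)
  have hBβ : B ≤ algebraMap ℝ (H →L[ℂ] H) β :=
    (le_algebraMap_iff_spectrum_le hB).mpr fun z hz => le_csSup hScpt.bddAbove (Or.inr hz)
  have hspecC : ∀ s ∈ Set.Icc (0:ℝ) 1, spectrum ℝ ((1 - s) • A + s • B) ⊆ I := by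
    intro s hs z hz
    have h1s : (0:ℝ) ≤ 1 - s := by linarith [hs.2]
    have hαC : algebraMap ℝ (H →L[ℂ] H) α ≤ (1 - s) • A + s • B := by
      have e : algebraMap ℝ (H →L[ℂ] H) α
          = (1 - s) • algebraMap ℝ (H →L[ℂ] H) α + s • algebraMap ℝ (H →L[ℂ] H) α := by
        module
      rw [e]
      exact daoc_add_le_add (daoc_smul_mono hαA h1s) (daoc_smul_mono hαB hs.1)
    have hCβ : (1 - s) • A + s • B ≤ algebraMap ℝ (H →L[ℂ] H) β := by
      have e : algebraMap ℝ (H →L[ℂ] H) β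
          = (1 - s) • algebraMap ℝ (H →L[ℂ] H) β + s • algebraMap ℝ (H →L[ℂ] H) β := by
        module
      rw [e]
      exact daoc_add_le_add (daoc_smul_mono hAβ h1s) (daoc_smul_mono hBβ hs.1)
    exact hIccI ⟨(algebraMap_le_iff_le_spectrum (hCsa s)).mp hαC z hz,
      (le_algebraMap_iff_spectrum_le (hCsa s)).mp hCβ z hz⟩
  -- convexity of φ
  have hmix : ∀ s ∈ Set.Icc (0:ℝ) 1, ∀ t ∈ Set.Icc (0:ℝ) 1, ∀ lam ∈ Set.Icc (0:ℝ) 1,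
      φ ((1 - lam) * s + lam * t) ≤ (1 - lam) * φ s + lam * φ t := by
    intro s hs t ht lam hlam
    have key := hconvex ((1 - s) • A + s • B) ((1 - t) • A + t • B) (hCsa s) (hCsa t)
      (hspecC s hs) (hspecC t ht) lam hlam
    have E : (1 - lam) • ((1 - s) • A + s • B) + lam • ((1 - t) • A + t • B)
        = (1 - ((1 - lam) * s + lam * t)) • A + ((1 - lam) * s + lam * t) • B := by
      rw [show (1 - ((1 - lam) * s + lam * t)) = (1 - lam) * (1 - s) + lam * (1 - t) by ring]
      module
    rw [E] at key
    calc φ ((1 - lam) * s + lam * t)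
        ≤ RCLike.re ⟪((1 - lam) • cfc f ((1 - s) • A + s • B)
            + lam • cfc f ((1 - t) • A + t • B)) x, x⟫_ℂ := daoc_inner_mono key x
      _ = (1 - lam) * φ s + lam * φ t := daoc_inner_comb _ _ _ _ x
  have hφnn : ∀ s ∈ Set.Icc (0:ℝ) 1, 0 ≤ φ s := fun s hs =>
    daoc_inner_nonneg (cfc_nonneg fun z hz => hfnonneg z (hspecC s hs hz)) x
  have hφle : ∀ s ∈ Set.Icc (0:ℝ) 1, φ s ≤ max (φ 0) (φ 1) := by
    intro s hs
    have h := hmix 0 (by norm_num) 1 (by norm_num) s hs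
    rw [show (1 - s) * 0 + s * 1 = s by ring] at h
    have h0 : φ 0 ≤ max (φ 0) (φ 1) := le_max_left _ _
    have h1 : φ 1 ≤ max (φ 0) (φ 1) := le_max_right _ _
    nlinarith [hs.1, hs.2]
  have hconvOn : ConvexOn ℝ (Set.Icc (0:ℝ) 1) φ := by
    refine ⟨convex_Icc 0 1, ?_⟩
    intro u hu v hv p q hp hq hpq
    have hpq' : p = 1 - q := by linarith
    have h := hmix u hu v hv q ⟨hq, by linarith⟩
    calc φ (p • u + q • v) = φ ((1 - q) * u + q * v) := by rw [hpq']; simp [smul_eq_mul]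
      _ ≤ (1 - q) * φ u + q * φ v := h
      _ = p * φ u + q * φ v := by rw [hpq']
  have hφcont : ContinuousOn φ (Set.Ioo (0:ℝ) 1) :=
    (hconvOn.subset Set.Ioo_subset_Icc_self (convex_Ioo 0 1)).continuousOn isOpen_Ioo
  -- integrability
  have hφI : ∀ c d : ℝ, 0 ≤ c → d ≤ b → c ≤ d → IntervalIntegrable φ volume c d := by
    intro c d hc hd hcd
    rw [intervalIntegrable_iff_integrableOn_Ioc_of_le hcd]
    have hsub2 : Set.Ioc c d ⊆ Set.Ioo (0:ℝ) 1 :=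
      fun z hz => ⟨lt_of_le_of_lt hc hz.1, lt_of_le_of_lt (hz.2.trans hd) hb.2⟩
    refine ⟨(hφcont.mono hsub2).aestronglyMeasurable measurableSet_Ioc,
      (haveI : Fact (volume (Set.Ioc c d) < ⊤) := ⟨measure_Ioc_lt_top⟩
       MeasureTheory.HasFiniteIntegral.of_bounded (C := max (φ 0) (φ 1)) ?_)⟩
    rw [MeasureTheory.ae_restrict_iff' measurableSet_Ioc]
    filter_upwards with z hz
    have hz01 : z ∈ Set.Icc (0:ℝ) 1 := Set.Ioo_subset_Icc_self (hsub2 hz)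
    rw [Real.norm_eq_abs, abs_of_nonneg (hφnn z hz01)]
    exact hφle z hz01
  -- primitive Φ from a
  set Φ : ℝ → ℝ := fun u => ∫ s in a..u, φ s with hΦdef
  have huIccIoo : ∀ u ∈ Set.Ioo (0:ℝ) 1, Set.uIcc a u ⊆ Set.Ioo (0:ℝ) 1 := by
    intro u hu
    rcases le_total a u with h | h
    · rw [Set.uIcc_of_le h]
      exact fun z hz => ⟨lt_of_lt_of_le ha.1 hz.1, lt_of_le_of_lt hz.2 hu.2⟩
    · rw [Set.uIcc_of_ge h]
      exact fun z hz => ⟨lt_of_lt_of_le hu.1 hz.1, lt_of_le_of_lt hz.2 ha.2⟩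
  have hΦd : ∀ u ∈ Set.Ioo (0:ℝ) 1, HasDerivAt Φ (φ u) u := by
    intro u hu
    exact intervalIntegral.integral_hasDerivAt_right
      ((hφcont.mono (huIccIoo u hu)).intervalIntegrable)
      (hφcont.stronglyMeasurableAtFilter isOpen_Ioo u hu)
      (hφcont.continuousAt (isOpen_Ioo.mem_nhds hu))
  have hΦcont : ContinuousOn Φ (Set.Ioo (0:ℝ) 1) :=
    fun u hu => (hΦd u hu).continuousAt.continuousWithinAt
  have hΦint : IntervalIntegrable Φ volume a b :=
    (hΦcont.mono (habI ▸ hsub)).intervalIntegrable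
  -- Fubini-type identity via FTC
  have hsφcont : ContinuousOn (fun s => s * φ s) (Set.Ioo (0:ℝ) 1) :=
    continuousOn_id.mul hφcont
  have hfub : (∫ t in a..b, Φ t) = ∫ s in a..b, (b - s) * φ s := by
    have hR : ∀ u ∈ Set.uIcc a b,
        HasDerivAt (fun v => (∫ t in a..v, Φ t) - (v * Φ v - ∫ s in a..v, s * φ s)) 0 u := by
      intro u hu
      rw [habI] at hu
      have hu01 : u ∈ Set.Ioo (0:ℝ) 1 := hsub hu
      have h1 : HasDerivAt (fun v => ∫ t in a..v, Φ t) (Φ u) u :=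
        intervalIntegral.integral_hasDerivAt_right
          ((hΦcont.mono (huIccIoo u hu01)).intervalIntegrable)
          (hΦcont.stronglyMeasurableAtFilter isOpen_Ioo u hu01)
          (hΦcont.continuousAt (isOpen_Ioo.mem_nhds hu01))
      have h2 : HasDerivAt (fun v => v * Φ v) (1 * Φ u + u * φ u) u :=
        (hasDerivAt_id u).mul (hΦd u hu01)
      have h3 : HasDerivAt (fun v => ∫ s in a..v, s * φ s) (u * φ u) u :=
        intervalIntegral.integral_hasDerivAt_right
          ((hsφcont.mono (huIccIoo u hu01)).intervalIntegrable)
          (hsφcont.stronglyMeasurableAtFilter isOpen_Ioo u hu01)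
          (hsφcont.continuousAt (isOpen_Ioo.mem_nhds hu01))
      have h4 := h1.sub (h2.sub h3)
      convert h4 using 1
      · rfl
      · rfl
      · rfl
      · ring
    have h0 := intervalIntegral.integral_eq_sub_of_hasDerivAt hR
      (intervalIntegrable_const (c := (0:ℝ)))
    simp only [intervalIntegral.integral_zero, intervalIntegral.integral_same] at h0
    have hPa : Φ a = 0 := intervalIntegral.integral_same
    rw [hPa] at h0
    have hbφint : IntervalIntegrable (fun s => b * φ s) volume a b :=
      (hφI a b ha.1.le le_rfl hab').const_mul b
    have hsφint : IntervalIntegrable (fun s => s * φ s) volume a b :=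
      (hsφcont.mono (habI ▸ hsub)).intervalIntegrable
    have hEq : (∫ s in a..b, (b - s) * φ s) = b * Φ b - ∫ s in a..b, s * φ s := by
      have : (fun s => (b - s) * φ s) = fun s => b * φ s - s * φ s := by
        funext s; ring
      rw [this, intervalIntegral.integral_sub hbφint hsφint,
        intervalIntegral.integral_const_mul]
    rw [hEq]
    linarith [h0]
  -- gluing integrals from 0
  have hglue : ∀ t ∈ Set.uIcc a b, (∫ s in (0:ℝ)..t, φ s) = (∫ s in (0:ℝ)..a, φ s) + Φ t := by
    intro t ht
    rw [habI] at ht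
    exact (intervalIntegral.integral_add_adjacent_intervals
      (hφI 0 a le_rfl hab' ha.1.le) (hφI a t ha.1.le ht.2 ht.1)).symm
  have hFb : (∫ s in (0:ℝ)..b, φ s) = (∫ s in (0:ℝ)..a, φ s) + Φ b :=
    hglue b Set.right_mem_uIcc
  have hIntF : (∫ t in a..b, ∫ s in (0:ℝ)..t, φ s)
      = (b - a) * (∫ s in (0:ℝ)..a, φ s) + ∫ t in a..b, Φ t := by
    rw [intervalIntegral.integral_congr hglue,
      intervalIntegral.integral_add (intervalIntegrable_const) hΦint,
      intervalIntegral.integral_const]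
    simp [smul_eq_mul]
  rw [hFb, hIntF, hfub]
  -- reduce to the key integral K
  set m : ℝ := (a + b) / 2 with hmdef
  have hK : (∫ s in a..b, (s - m) * φ s)
      = (b - a) / 2 * Φ b - ∫ s in a..b, (b - s) * φ s := by
    have e : (fun s => (s - m) * φ s) = fun s => (b - a) / 2 * φ s - (b - s) * φ s := by
      funext s; rw [hmdef]; ring
    have h1 : IntervalIntegrable (fun s => (b - a) / 2 * φ s) volume a b :=
      (hφI a b ha.1.le le_rfl hab').const_mul _
    have h2 : IntervalIntegrable (fun s => (b - s) * φ s) volume a b :=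
      (((continuous_const.sub continuous_id).continuousOn).mul
        (hφcont.mono (habI ▸ hsub))).intervalIntegrable
    rw [e, intervalIntegral.integral_sub h1 h2, intervalIntegral.integral_const_mul]
  have hgoalD : (2:ℝ)⁻¹ * (∫ s in (0:ℝ)..a, φ s)
        + (2:ℝ)⁻¹ * ((∫ s in (0:ℝ)..a, φ s) + Φ b)
        - (b - a)⁻¹ * ((b - a) * (∫ s in (0:ℝ)..a, φ s) + ∫ s in a..b, (b - s) * φ s)
      = (b - a)⁻¹ * ∫ s in a..b, (s - m) * φ s := by
    rw [hK]
    field_simp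
    ring
  rw [hgoalD, abs_mul, abs_of_pos (inv_pos.mpr hba)]
  -- bound |K|
  have hφab : ∀ s ∈ Set.Icc a b, φ s ≤ ((b - s) * φ a + (s - a) * φ b) / (b - a) := by
    intro s hs
    have hlam : (s - a) / (b - a) ∈ Set.Icc (0:ℝ) 1 := by
      constructor
      · exact div_nonneg (by linarith [hs.1]) hba.le
      · rw [div_le_one hba]; linarith [hs.2]
    have h := hmix a (Set.Ioo_subset_Icc_self (hsub (Set.left_mem_Icc.mpr hab')))
      b (Set.Ioo_subset_Icc_self (hsub (Set.right_mem_Icc.mpr hab')))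
      ((s - a) / (b - a)) hlam
    rw [show (1 - (s - a) / (b - a)) * a + (s - a) / (b - a) * b = s by
      field_simp; ring] at h
    calc φ s ≤ (1 - (s - a) / (b - a)) * φ a + (s - a) / (b - a) * φ b := h
      _ = ((b - s) * φ a + (s - a) * φ b) / (b - a) := by
          rw [eq_div_iff hba.ne']; field_simp; ring
  have habs_cont : ContinuousOn (fun s => |s - m| * φ s) (Set.Ioo (0:ℝ) 1) :=
    ((continuous_id.sub continuous_const).abs.continuousOn).mul hφcont
  have habsint : IntervalIntegrable (fun s => |s - m| * φ s) volume a b :=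
    (habs_cont.mono (habI ▸ hsub)).intervalIntegrable
  have hellcont : Continuous
      (fun s : ℝ => |s - m| * (((b - s) * φ a + (s - a) * φ b) / (b - a))) :=
    ((continuous_id.sub continuous_const).abs).mul
      ((((continuous_const.sub continuous_id).mul continuous_const).add
        ((continuous_id.sub continuous_const).mul continuous_const)).div_const _)
  have hellint : IntervalIntegrable
      (fun s => |s - m| * (((b - s) * φ a + (s - a) * φ b) / (b - a))) volume a b :=
    hellcont.intervalIntegrable a b
  have hKabs : |∫ s in a..b, (s - m) * φ s| ≤ ∫ s in a..b, |s - m| * φ s := by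
    calc |∫ s in a..b, (s - m) * φ s| ≤ ∫ s in a..b, |(s - m) * φ s| :=
          intervalIntegral.abs_integral_le_integral_abs hab'
      _ = ∫ s in a..b, |s - m| * φ s := by
          apply intervalIntegral.integral_congr
          intro s hs
          rw [habI] at hs
          show |(s - m) * φ s| = |s - m| * φ s
          rw [abs_mul, abs_of_nonneg (hφnn s (Set.Ioo_subset_Icc_self (hsub hs)))]
  have hKell : (∫ s in a..b, |s - m| * φ s)
      ≤ ∫ s in a..b, |s - m| * (((b - s) * φ a + (s - a) * φ b) / (b - a)) := by
    apply intervalIntegral.integral_mono_on hab' habsint hellint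
    intro s hs
    exact mul_le_mul_of_nonneg_left (hφab s hs) (abs_nonneg _)
  -- exact value of the majorising integral
  have hval : (∫ s in a..b, |s - m| * (((b - s) * φ a + (s - a) * φ b) / (b - a)))
      = (b - a) ^ 2 / 8 * (φ a + φ b) := by
    have ham : a ≤ m := by rw [hmdef]; linarith
    have hmb : m ≤ b := by rw [hmdef]; linarith
    have int1 : IntervalIntegrable
        (fun s => |s - m| * (((b - s) * φ a + (s - a) * φ b) / (b - a))) volume a m :=
      hellcont.intervalIntegrable a m
    have int2 : IntervalIntegrable
        (fun s => |s - m| * (((b - s) * φ a + (s - a) * φ b) / (b - a))) volume m b :=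
      hellcont.intervalIntegrable m b
    have e1 : (∫ s in a..m, |s - m| * (((b - s) * φ a + (s - a) * φ b) / (b - a)))
        = ∫ s in a..m, (((φ a - φ b) / (b - a)) * s ^ 2
            + ((-(m + b) * φ a + (m + a) * φ b) / (b - a)) * s
            + ((m * b * φ a - m * a * φ b) / (b - a))) := by
      apply intervalIntegral.integral_congr
      intro s hs
      rw [Set.uIcc_of_le ham] at hs
      show |s - m| * _ = _
      rw [abs_of_nonpos (by linarith [hs.2] : s - m ≤ 0)]
      field_simp
      ring
    have e2 : (∫ s in m..b, |s - m| * (((b - s) * φ a + (s - a) * φ b) / (b - a)))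
        = ∫ s in m..b, (((φ b - φ a) / (b - a)) * s ^ 2
            + (((m + b) * φ a - (m + a) * φ b) / (b - a)) * s
            + ((-(m * b) * φ a + m * a * φ b) / (b - a))) := by
      apply intervalIntegral.integral_congr
      intro s hs
      rw [Set.uIcc_of_le hmb] at hs
      show |s - m| * _ = _
      rw [abs_of_nonneg (by linarith [hs.1] : (0:ℝ) ≤ s - m)]
      field_simp
      ring
    rw [← intervalIntegral.integral_add_adjacent_intervals int1 int2, e1, e2,
      daoc_integral_quadratic, daoc_integral_quadratic, hmdef]
    field_simp
    ring
  have hφannb : 0 ≤ φ a + φ b := by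
    have h1 := hφnn a (Set.Ioo_subset_Icc_self (hsub (Set.left_mem_Icc.mpr hab')))
    have h2 := hφnn b (Set.Ioo_subset_Icc_self (hsub (Set.right_mem_Icc.mpr hab')))
    linarith
  calc (b - a)⁻¹ * |∫ s in a..b, (s - m) * φ s|
      ≤ (b - a)⁻¹ * ((b - a) ^ 2 / 8 * (φ a + φ b)) := by
        apply mul_le_mul_of_nonneg_left _ (inv_pos.mpr hba).le
        rw [← hval]
        exact hKabs.trans hKell
    _ = (b - a) / 8 * (φ a + φ b) := by field_simp
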